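/- Let a_1, ..., a_d be linearly independent vectors in R^d with <a_i, a_j> ≤ 0 for all i < j. Let b_1, ..., b_d be vectors such that cone(b_1,...,b_d) = {x ∈ R^d : <a_i, x> ≤ 0 for all i}. Then <b_i, b_j> ≥ 0 for all 1 ≤ i < j ≤ d. -/

import Mathlib

open scoped RealInnerProductSpace

theorem stmt_0 (d : ℕ) (a b : Fin d → EuclideanSpace ℝ (Fin d))
    (ha : LinearIndependent ℝ a)
    (hneg : ∀ i j : Fin d, i < j → ⟪a i, a j⟫ ≤ 0)
    (hcone : {x : EuclideanSpace ℝ (Fin d) |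
        ∃ c : Fin d → ℝ, (∀ i, 0 ≤ c i) ∧ x = ∑ i, c i • b i} =
      {x : EuclideanSpace ℝ (Fin d) | ∀ i, ⟪a i, x⟫ ≤ 0}) :
    ∀ i j : Fin d, i < j → 0 ≤ ⟪b i, b j⟫ := by
  classical
  rcases Nat.eq_zero_or_pos d with rfl | hd
  · intro i j _; exact i.elim0
  haveI : Nonempty (Fin d) := ⟨⟨0, hd⟩⟩
  have hcard : Fintype.card (Fin d) = Module.finrank ℝ (EuclideanSpace ℝ (Fin d)) := by
    simp [finrank_euclideanSpace]
  let B : Module.Basis (Fin d) ℝ (EuclideanSpace ℝ (Fin d)) :=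
    basisOfLinearIndependentOfCardEqFinrank ha hcard
  have hB : ∀ i, B i = a i := by
    intro i
    have := coe_basisOfLinearIndependentOfCardEqFinrank ha hcard
    exact congrFun this i
  -- dual basis
  let astar : Fin d → EuclideanSpace ℝ (Fin d) :=
    fun k => (InnerProductSpace.toDual ℝ _).symm (LinearMap.toContinuousLinearMap (B.coord k))
  have hstar : ∀ k x, ⟪astar k, x⟫ = B.repr x k := by
    intro k x
    simp [astar, InnerProductSpace.toDual_symm_apply, Module.Basis.coord_apply]
  have hdelta : ∀ k l, ⟪astar k, a l⟫ = if l = k then 1 else 0 := by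
    intro k l
    rw [hstar, ← hB, B.repr_self]
    simp [Finsupp.single_apply]
  have hdelta' : ∀ k l, ⟪a l, astar k⟫ = if l = k then 1 else 0 := by
    intro k l
    rw [real_inner_comm]
    exact hdelta k l
  have hneg' : ∀ i j : Fin d, i ≠ j → ⟪a i, a j⟫ ≤ 0 := by
    intro i j h
    rcases h.lt_or_gt with h | h
    · exact hneg i j h
    · rw [real_inner_comm]; exact hneg j i h
  -- each dual basis vector has nonnegative coordinates in basis a
  have hAA : ∀ k l, 0 ≤ B.repr (astar k) l := by
    intro k l
    set t : Fin d → ℝ := fun i => B.repr (astar k) i with ht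
    have hrepr : astar k = ∑ i, t i • a i := by
      conv_lhs => rw [← B.sum_repr (astar k)]
      refine Finset.sum_congr rfl fun i _ => ?_
      rw [hB]
    set w : EuclideanSpace ℝ (Fin d) := ∑ i, max (-t i) 0 • a i with hw
    have hwx : ⟪w, astar k⟫ = max (-t k) 0 := by
      rw [hw, sum_inner]
      have : ∀ i : Fin d, i ∈ Finset.univ →
          ⟪max (-t i) 0 • a i, astar k⟫ = if i = k then max (-t i) 0 else 0 := by
        intro i _
        rw [real_inner_smul_left, hdelta' k i]
        by_cases h : i = k <;> simp [h]
      rw [Finset.sum_congr rfl this, Finset.sum_ite_eq' Finset.univ k]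
      simp
    have hws : w + astar k = ∑ i, max (t i) 0 • a i := by
      rw [hw, hrepr, ← Finset.sum_add_distrib]
      refine Finset.sum_congr rfl fun i _ => ?_
      rw [← add_smul]
      congr 1
      rcases le_total 0 (t i) with h | h
      · rw [max_eq_right (neg_nonpos.2 h), max_eq_left h]; ring
      · rw [max_eq_left (neg_nonneg.2 h), max_eq_right h]; ring
    have hwu : ⟪w, w + astar k⟫ ≤ 0 := by
      rw [hws, hw, sum_inner]
      apply Finset.sum_nonpos
      intro i _
      rw [real_inner_smul_left, inner_sum, Finset.mul_sum]
      apply Finset.sum_nonpos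
      intro j _
      rw [real_inner_smul_right]
      rcases eq_or_ne i j with rfl | hij
      · have h0 : max (-t i) 0 * max (t i) 0 = 0 := by
          rcases le_total 0 (t i) with h | h
          · rw [max_eq_right (neg_nonpos.2 h)]; ring
          · rw [max_eq_right h]; ring
        rw [← mul_assoc, h0, zero_mul]
      · have h1 : (0:ℝ) ≤ max (-t i) 0 := le_max_right _ _
        have h2 : (0:ℝ) ≤ max (t j) 0 := le_max_right _ _
        have h3 := hneg' i j hij
        nlinarith [mul_nonneg h1 h2]
    have hwadd : ⟪w, w + astar k⟫ = ⟪w, w⟫ + ⟪w, astar k⟫ := inner_add_right w w (astar k)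
    have hww0 : ⟪w, w⟫ = 0 := by
      have h2 : (0:ℝ) ≤ ⟪w, w⟫ := real_inner_self_nonneg
      have h1 : (0:ℝ) ≤ max (-t k) 0 := le_max_right _ _
      linarith [hwadd, hwu, hwx]
    have hw0 : w = 0 := inner_self_eq_zero.mp hww0
    have hzero : ∀ i, max (-t i) 0 = 0 := by
      have := Fintype.linearIndependent_iff.mp ha (fun i => max (-t i) 0) (by rw [← hw]; exact hw0)
      exact this
    have : -t l ≤ 0 := by
      have := hzero l
      calc -t l ≤ max (-t l) 0 := le_max_left _ _
        _ = 0 := this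
    linarith
  have hAA' : ∀ k l, 0 ≤ ⟪astar k, astar l⟫ := by
    intro k l
    rw [real_inner_comm, hstar]
    exact hAA k l
  -- expansion of any vector in dual basis
  have hexp : ∀ x : EuclideanSpace ℝ (Fin d), x = ∑ k, ⟪a k, x⟫ • astar k := by
    intro x
    set y := x - ∑ k, ⟪a k, x⟫ • astar k with hy'
    have hy : ∀ jj, ⟪a jj, y⟫ = 0 := by
      intro jj
      rw [hy', inner_sub_right, inner_sum]
      have : ∀ k : Fin d, k ∈ Finset.univ →
          ⟪a jj, ⟪a k, x⟫ • astar k⟫ = if k = jj then ⟪a jj, x⟫ else 0 := by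
        intro k _
        rw [real_inner_smul_right, hdelta' k jj]
        by_cases h : k = jj
        · subst h; simp
        · have h' : ¬ jj = k := fun hh => h hh.symm
          simp [h, h']
      rw [Finset.sum_congr rfl this, Finset.sum_ite_eq' Finset.univ jj]
      simp
    have hyy : ⟪y, y⟫ = 0 := by
      have hrepr : y = ∑ i, B.repr y i • a i := by
        conv_lhs => rw [← B.sum_repr y]
        refine Finset.sum_congr rfl fun i _ => ?_
        rw [hB]
      nth_rewrite 1 [hrepr]
      rw [sum_inner]
      apply Finset.sum_eq_zero
      intro i _
      rw [real_inner_smul_left, hy i, mul_zero]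
    have : y = 0 := inner_self_eq_zero.mp hyy
    have := sub_eq_zero.mp this
    exact this
  -- b m lies in the cone, hence satisfies the inequalities
  have hb : ∀ m k : Fin d, ⟪a k, b m⟫ ≤ 0 := by
    intro m k
    have hmem : b m ∈ {x : EuclideanSpace ℝ (Fin d) |
        ∃ c : Fin d → ℝ, (∀ i, 0 ≤ c i) ∧ x = ∑ i, c i • b i} := by
      refine ⟨fun j => if j = m then 1 else 0, fun j => by positivity, ?_⟩
      simp [ite_smul]
    rw [hcone] at hmem
    exact hmem k
  have key : ∀ x y : EuclideanSpace ℝ (Fin d),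
      (∀ k, ⟪a k, x⟫ ≤ 0) → (∀ k, ⟪a k, y⟫ ≤ 0) → 0 ≤ ⟪x, y⟫ := by
    intro x y hx hy
    rw [hexp x, hexp y, sum_inner]
    apply Finset.sum_nonneg
    intro k _
    rw [real_inner_smul_left, inner_sum]
    have hsum : (∑ l, ⟪astar k, ⟪a l, y⟫ • astar l⟫ : ℝ) ≤ 0 := by
      apply Finset.sum_nonpos
      intro l _
      rw [real_inner_smul_right]
      exact mul_nonpos_iff.mpr (Or.inr ⟨hy l, hAA' k l⟩)
    nlinarith [mul_nonneg (neg_nonneg.2 (hx k)) (neg_nonneg.2 hsum)]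
  intro i j _
  exact key (b i) (b j) (fun k => hb i k) (fun k => hb j k)
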